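/- -∫₀¹ Li₂(-x)/(1+x) dx = π²/12 · ln 2 - ζ(3)/4. -/

import Mathlib

open MeasureTheory intervalIntegral Real Set Filter

noncomputable def Li2 (z : ℝ) : ℝ := ∑' n : ℕ, z ^ (n + 1) / ((n : ℝ) + 1) ^ 2

noncomputable def Li3 (z : ℝ) : ℝ := ∑' n : ℕ, z ^ (n + 1) / ((n : ℝ) + 1) ^ 3

lemma summable_aux (k : ℕ) (hk : 2 ≤ k) : Summable (fun n : ℕ => 1 / ((n : ℝ) + 1) ^ k) := by
  have := (Real.summable_one_div_nat_pow (p := k)).2 hk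
  have h2 := (summable_nat_add_iff (f := fun n : ℕ => 1 / (n : ℝ) ^ k) 1).2 this
  simpa using h2

lemma summable_Li2 {z : ℝ} (h : |z| ≤ 1) :
    Summable (fun n : ℕ => z ^ (n + 1) / ((n : ℝ) + 1) ^ 2) := by
  apply Summable.of_norm_bounded (summable_aux 2 le_rfl)
  intro n
  have h1 : |z ^ (n+1)| ≤ 1 := by
    rw [abs_pow]; exact pow_le_one₀ (abs_nonneg z) h
  have h2 : (0:ℝ) < ((n:ℝ)+1)^2 := by positivity
  rw [norm_div, norm_pow]
  simp only [Real.norm_eq_abs]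
  rw [abs_of_pos h2]
  gcongr
  exact pow_le_one₀ (abs_nonneg z) h

lemma summable_Li3 {z : ℝ} (h : |z| ≤ 1) :
    Summable (fun n : ℕ => z ^ (n + 1) / ((n : ℝ) + 1) ^ 3) := by
  apply Summable.of_norm_bounded (summable_aux 3 (by norm_num))
  intro n
  have h2 : (0:ℝ) < ((n:ℝ)+1)^3 := by positivity
  rw [norm_div, norm_pow]
  simp only [Real.norm_eq_abs]
  rw [abs_of_pos h2]
  gcongr
  exact pow_le_one₀ (abs_nonneg z) h

lemma continuousOn_Li2 : ContinuousOn Li2 (Icc (-1:ℝ) 1) := by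
  apply continuousOn_tsum (u := fun n : ℕ => 1 / ((n : ℝ) + 1) ^ 2)
    (fun i => ((continuous_pow _).continuousOn.div_const _)) (summable_aux 2 le_rfl)
  intro n x hx
  have h2 : (0:ℝ) < ((n:ℝ)+1)^2 := by positivity
  rw [norm_div, norm_pow, Real.norm_eq_abs, Real.norm_eq_abs, abs_of_pos h2]
  gcongr
  exact pow_le_one₀ (abs_nonneg x) (abs_le.2 ⟨hx.1, hx.2⟩)

lemma continuousOn_Li3 : ContinuousOn Li3 (Icc (-1:ℝ) 1) := by
  apply continuousOn_tsum (u := fun n : ℕ => 1 / ((n : ℝ) + 1) ^ 3)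
    (fun i => ((continuous_pow _).continuousOn.div_const _)) (summable_aux 3 (by norm_num))
  intro n x hx
  have h2 : (0:ℝ) < ((n:ℝ)+1)^3 := by positivity
  rw [norm_div, norm_pow, Real.norm_eq_abs, Real.norm_eq_abs, abs_of_pos h2]
  gcongr
  exact pow_le_one₀ (abs_nonneg x) (abs_le.2 ⟨hx.1, hx.2⟩)

lemma Li2_zero : Li2 0 = 0 := by simp [Li2]

lemma Li3_zero : Li3 0 = 0 := by simp [Li3]

lemma Li3_one : Li3 1 = ∑' n : ℕ, 1 / ((n : ℝ) + 1) ^ 3 := by simp [Li3]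

lemma Li2_one : Li2 1 = Real.pi ^ 2 / 6 := by
  have h := hasSum_zeta_two
  have h0 : Li2 1 = ∑' n : ℕ, 1 / ((n : ℝ) + 1) ^ 2 := by simp [Li2]
  rw [h0]
  have := h.tsum_eq
  rw [← this]
  rw [Summable.tsum_eq_zero_add h.summable]
  push_cast
  simp

lemma Li2_neg_one : Li2 (-1) = -(Real.pi ^ 2 / 12) := by
  have hg : Summable (fun n : ℕ => 1 / ((n : ℝ) + 1) ^ 2) := summable_aux 2 le_rfl
  have hf : Summable (fun n : ℕ => (-1:ℝ) ^ (n+1) / ((n : ℝ) + 1) ^ 2) := by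
    have := summable_Li2 (z := -1) (by norm_num)
    simpa using this
  set h : ℕ → ℝ := fun n => (-1:ℝ) ^ (n+1) / ((n : ℝ) + 1) ^ 2 + 1 / ((n : ℝ) + 1) ^ 2 with hh
  have hhs : Summable h := hf.add hg
  have he : ∀ k : ℕ, h (2*k) = 0 := by
    intro k
    simp only [hh]
    rw [pow_succ, pow_mul]
    norm_num
    ring
  have ho : ∀ k : ℕ, h (2*k+1) = (1/2) * (1 / ((k : ℝ) + 1) ^ 2) := by
    intro k
    simp only [hh]
    rw [pow_succ, pow_succ, pow_mul]
    push_cast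
    have : ((2:ℝ)*k+1+1) = 2*((k:ℝ)+1) := by ring
    rw [this]
    rw [mul_pow]
    have hk : ((k:ℝ)+1) ≠ 0 := by positivity
    field_simp
    ring
  have hsum : ∑' n, h n = (1/2) * (Real.pi ^ 2 / 6) := by
    rw [← tsum_even_add_odd (by simpa [he] using summable_zero)
      (by simp only [ho]; exact hg.mul_left _)]
    simp only [he, ho, tsum_zero, zero_add, tsum_mul_left]
    congr 1
    have h0 : Li2 1 = ∑' n : ℕ, 1 / ((n : ℝ) + 1) ^ 2 := by simp [Li2]
    rw [← h0, Li2_one]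
  have hadd : ∑' n, h n = Li2 (-1) + Real.pi ^ 2 / 6 := by
    have h1 : ∑' n : ℕ, (-1:ℝ)^(n+1)/((n:ℝ)+1)^2 = Li2 (-1) := by simp [Li2]
    have h2 : ∑' n : ℕ, 1/((n:ℝ)+1)^2 = Real.pi ^ 2 / 6 := by
      rw [← Li2_one]; simp [Li2]
    rw [hh, Summable.tsum_add hf hg, h1, h2]
  rw [hadd] at hsum
  linarith

lemma Li3_neg_one : Li3 (-1) = -(3/4) * ∑' n : ℕ, 1 / ((n : ℝ) + 1) ^ 3 := by
  have hg : Summable (fun n : ℕ => 1 / ((n : ℝ) + 1) ^ 3) := summable_aux 3 (by norm_num)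
  have hf : Summable (fun n : ℕ => (-1:ℝ) ^ (n+1) / ((n : ℝ) + 1) ^ 3) := by
    have := summable_Li3 (z := -1) (by norm_num)
    simpa using this
  set h : ℕ → ℝ := fun n => (-1:ℝ) ^ (n+1) / ((n : ℝ) + 1) ^ 3 + 1 / ((n : ℝ) + 1) ^ 3 with hh
  have he : ∀ k : ℕ, h (2*k) = 0 := by
    intro k
    simp only [hh]
    rw [pow_succ, pow_mul]
    norm_num
    ring
  have ho : ∀ k : ℕ, h (2*k+1) = (1/4) * (1 / ((k : ℝ) + 1) ^ 3) := by
    intro k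
    simp only [hh]
    rw [pow_succ, pow_succ, pow_mul]
    push_cast
    have : ((2:ℝ)*k+1+1) = 2*((k:ℝ)+1) := by ring
    rw [this]
    rw [mul_pow]
    have hk : ((k:ℝ)+1) ≠ 0 := by positivity
    field_simp
    ring
  have hsum : ∑' n, h n = (1/4) * ∑' n : ℕ, 1 / ((n : ℝ) + 1) ^ 3 := by
    rw [← tsum_even_add_odd (by simpa [he] using summable_zero)
      (by simp only [ho]; exact hg.mul_left _)]
    simp only [he, ho, tsum_zero, zero_add, tsum_mul_left]
  have hadd : ∑' n, h n = Li3 (-1) + ∑' n : ℕ, 1 / ((n : ℝ) + 1) ^ 3 := by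
    have h1 : ∑' n : ℕ, (-1:ℝ)^(n+1)/((n:ℝ)+1)^3 = Li3 (-1) := by simp [Li3]
    rw [hh, Summable.tsum_add hf hg, h1]
  rw [hadd] at hsum
  linarith


lemma integral_tsum_pow (c : ℕ → ℝ) (hc : ∀ n, |c n| ≤ 1) {a u : ℝ} (ha : -1 < a) (hau : a ≤ u) (hu : u < 1) :
    ∫ t in a..u, (∑' n, c n * t ^ n) = ∑' n, c n * (u^(n+1) - a^(n+1))/((n:ℝ)+1) := by
  set r : ℝ := max |a| |u| with hr
  have hr1 : r < 1 := by
    apply max_lt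
    · rw [abs_lt]; constructor <;> nlinarith
    · rw [abs_lt]; constructor <;> nlinarith
  have hr0 : 0 ≤ r := le_trans (abs_nonneg a) (le_max_left _ _)
  have hbound : ∀ n : ℕ, ∀ t ∈ Ioc a u, ‖c n * t ^ n‖ ≤ r ^ n := by
    intro n t ht
    rw [norm_mul, norm_pow]
    calc ‖c n‖ * ‖t‖ ^ n ≤ 1 * r ^ n := by
          apply mul_le_mul (hc n) _ (by positivity) zero_le_one
          apply pow_le_pow_left₀ (norm_nonneg t)
          rw [Real.norm_eq_abs, abs_le]
          constructor
          · linarith [neg_abs_le a, (le_max_left |a| |u|), ht.1]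
          · exact le_trans (le_trans ht.2 (le_abs_self u)) (le_max_right _ _)
      _ = r ^ n := one_mul _
  rw [intervalIntegral.integral_of_le hau]
  have hint : ∀ n : ℕ, Integrable (fun t => c n * t ^ n) (volume.restrict (Ioc a u)) := by
    intro n
    exact ((continuous_const.mul (continuous_pow n)).integrableOn_Ioc).integrable
  rw [← MeasureTheory.integral_tsum_of_summable_integral_norm hint ?_]
  · congr 1
    ext n
    have : ∫ t in Ioc a u, c n * t ^ n = ∫ t in a..u, c n * t ^ n := by
      rw [intervalIntegral.integral_of_le hau]
    rw [this, intervalIntegral.integral_const_mul, integral_pow]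
    ring
  · apply Summable.of_nonneg_of_le (fun n => by positivity)
      (fun n => ?_) (Summable.mul_left (u - a) (summable_geometric_of_lt_one hr0 hr1))
    have h1 : ∫ t in Ioc a u, ‖c n * t ^ n‖ ≤ r ^ n * (volume (Ioc a u)).toReal := by
      have := MeasureTheory.norm_setIntegral_le_of_norm_le_const (μ := volume)
        (s := Ioc a u) (f := fun t => ‖c n * t ^ n‖) (C := r ^ n)
        (by rw [Real.volume_Ioc]; exact ENNReal.ofReal_lt_top)
        (fun t ht => by rw [norm_norm]; exact hbound n t ht)
      · calc ∫ t in Ioc a u, ‖c n * t ^ n‖ ≤ ‖∫ t in Ioc a u, ‖c n * t ^ n‖‖ := le_abs_self _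
          _ ≤ r ^ n * (volume (Ioc a u)).toReal := this
    calc ∫ t in Ioc a u, ‖c n * t ^ n‖ ≤ r ^ n * (volume (Ioc a u)).toReal := h1
      _ ≤ (u - a) * r ^ n := by
          rw [Real.volume_Ioc, ENNReal.toReal_ofReal (by linarith)]
          ring_nf; rfl


lemma log_rep {t : ℝ} (h : |t| < 1) (ht : t ≠ 0) :
    -Real.log (1 - t) / t = ∑' n : ℕ, (1/((n:ℝ)+1)) * t ^ n := by
  have hs := Real.hasSum_pow_div_log_of_abs_lt_one h
  have : -Real.log (1 - t) / t = ∑' n : ℕ, (t ^ (n+1) / ((n:ℝ)+1)) / t := by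
    rw [tsum_div_const, hs.tsum_eq]
  rw [this]
  congr 1; ext n
  field_simp
  ring

lemma Li2_div_rep {t : ℝ} (h : |t| < 1) (ht : t ≠ 0) :
    Li2 t / t = ∑' n : ℕ, (1/((n:ℝ)+1)^2) * t ^ n := by
  have : Li2 t / t = ∑' n : ℕ, (t ^ (n+1) / ((n:ℝ)+1)^2) / t := by
    rw [tsum_div_const, Li2]
  rw [this]
  congr 1; ext n
  field_simp
  ring

lemma ae_ne_zero : ∀ᵐ (t : ℝ), t ≠ 0 := by
  have : (volume : Measure ℝ) {(0:ℝ)} = 0 := measure_singleton 0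
  rw [MeasureTheory.ae_iff]
  convert this using 2
  ext t
  simp

lemma Li2_sub {a u : ℝ} (ha : -1 < a) (hau : a ≤ u) (hu : u < 1) :
    ∫ t in a..u, (-Real.log (1-t)/t) = Li2 u - Li2 a := by
  have h1 : ∫ t in a..u, (-Real.log (1-t)/t) = ∫ t in a..u, (∑' n : ℕ, (1/((n:ℝ)+1)) * t ^ n) := by
    apply intervalIntegral.integral_congr_ae
    filter_upwards [ae_ne_zero] with t ht hmem
    rw [Set.uIoc_of_le hau] at hmem
    have habs : |t| < 1 := by
      rw [abs_lt]; exact ⟨lt_of_lt_of_le ha (le_of_lt hmem.1), lt_of_le_of_lt hmem.2 hu⟩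
    exact log_rep habs ht
  rw [h1, integral_tsum_pow _ (fun n => by
      rw [abs_of_nonneg (by positivity)]
      rw [div_le_one (by positivity)]; linarith [Nat.cast_nonneg (α := ℝ) n]) ha hau hu]
  rw [Li2, Li2, ← Summable.tsum_sub (summable_Li2 (abs_le.2 ⟨by linarith, by linarith⟩))
    (summable_Li2 (abs_le.2 ⟨by linarith, by linarith⟩))]
  congr 1; ext n
  field_simp

lemma Li3_sub {a u : ℝ} (ha : -1 < a) (hau : a ≤ u) (hu : u < 1) :
    ∫ t in a..u, (Li2 t / t) = Li3 u - Li3 a := by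
  have h1 : ∫ t in a..u, (Li2 t / t) = ∫ t in a..u, (∑' n : ℕ, (1/((n:ℝ)+1)^2) * t ^ n) := by
    apply intervalIntegral.integral_congr_ae
    filter_upwards [ae_ne_zero] with t ht hmem
    rw [Set.uIoc_of_le hau] at hmem
    have habs : |t| < 1 := by
      rw [abs_lt]; exact ⟨lt_of_lt_of_le ha (le_of_lt hmem.1), lt_of_le_of_lt hmem.2 hu⟩
    exact Li2_div_rep habs ht
  rw [h1, integral_tsum_pow _ (fun n => by
      rw [abs_of_nonneg (by positivity)]
      rw [div_le_one (by positivity)]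
      nlinarith [Nat.cast_nonneg (α := ℝ) n]) ha hau hu]
  rw [Li3, Li3, ← Summable.tsum_sub (summable_Li3 (abs_le.2 ⟨by linarith, by linarith⟩))
    (summable_Li3 (abs_le.2 ⟨by linarith, by linarith⟩))]
  congr 1; ext n
  field_simp

lemma intInt_tsum_pow (c : ℕ → ℝ) (hc : ∀ n, |c n| ≤ 1) {a u : ℝ} (ha : -1 < a) (hau : a ≤ u)
    (hu : u < 1) : IntervalIntegrable (fun t => ∑' n : ℕ, c n * t ^ n) volume a u := by
  set r : ℝ := max |a| |u| with hr
  have hr1 : r < 1 := by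
    apply max_lt
    · rw [abs_lt]; constructor <;> nlinarith
    · rw [abs_lt]; constructor <;> nlinarith
  have hr0 : 0 ≤ r := le_trans (abs_nonneg a) (le_max_left _ _)
  apply ContinuousOn.intervalIntegrable
  apply ContinuousOn.mono (s := Icc (-r) r)
  · apply continuousOn_tsum (u := fun n => r ^ n)
      (fun i => (continuous_const.mul (continuous_pow i)).continuousOn)
      (summable_geometric_of_lt_one hr0 hr1)
    intro n x hx
    show ‖c n * x ^ n‖ ≤ r ^ n
    rw [norm_mul, norm_pow, Real.norm_eq_abs, Real.norm_eq_abs]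
    calc |c n| * |x| ^ n ≤ 1 * r ^ n := by
          apply mul_le_mul (hc n) _ (by positivity) zero_le_one
          exact pow_le_pow_left₀ (abs_nonneg x) (abs_le.2 ⟨hx.1, hx.2⟩) n
      _ = r ^ n := one_mul _
  · rw [Set.uIcc_of_le hau]
    intro x hx
    constructor
    · exact le_trans (neg_le_neg (le_max_left |a| |u|)) (le_trans (neg_abs_le a) hx.1)
    · exact le_trans (le_trans hx.2 (le_abs_self u)) (le_max_right _ _)

lemma continuousAt_logint {y : ℝ} (h1 : y < 1) (hy : y ≠ 0) :
    ContinuousAt (fun t : ℝ => -Real.log (1-t)/t) y := by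
  have : ContinuousAt (fun t : ℝ => Real.log (1-t)) y := by
    apply ContinuousAt.comp (Real.continuousAt_log (by intro hc; rw [sub_eq_zero] at hc; linarith))
    exact (continuous_const.sub continuous_id).continuousAt
  exact this.neg.div continuousAt_id hy

lemma continuousAt_Li2div {y : ℝ} (h0 : -1 < y) (h1 : y < 1) (hy : y ≠ 0) :
    ContinuousAt (fun t : ℝ => Li2 t / t) y := by
  have hcy : ContinuousAt Li2 y :=
    continuousOn_Li2.continuousAt (Icc_mem_nhds (by linarith) (by linarith))
  exact hcy.div continuousAt_id hy

lemma measurable_logint : Measurable (fun t : ℝ => -Real.log (1-t)/t) := by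
  exact ((Real.measurable_log.comp (measurable_const.sub measurable_id)).neg).div measurable_id

lemma intInt_logint {a u : ℝ} (ha : -1 < a) (hau : a ≤ u) (hu : u < 1) :
    IntervalIntegrable (fun t : ℝ => -Real.log (1-t)/t) volume a u := by
  rw [intervalIntegrable_iff_integrableOn_Ioc_of_le hau]
  apply MeasureTheory.Integrable.congr
    ((intInt_tsum_pow (fun n => 1/((n:ℝ)+1)) (fun n => by
      rw [abs_of_nonneg (by positivity), div_le_one (by positivity)]
      linarith [Nat.cast_nonneg (α := ℝ) n]) ha hau hu).1)
  · apply (MeasureTheory.ae_restrict_iff' measurableSet_Ioc).2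
    filter_upwards [ae_ne_zero] with t ht hmem
    exact (log_rep (abs_lt.2 ⟨by linarith [hmem.1], by linarith [hmem.2]⟩) ht).symm

lemma intInt_Li2div {a u : ℝ} (ha : -1 < a) (hau : a ≤ u) (hu : u < 1) :
    IntervalIntegrable (fun t : ℝ => Li2 t / t) volume a u := by
  rw [intervalIntegrable_iff_integrableOn_Ioc_of_le hau]
  apply MeasureTheory.Integrable.congr
    ((intInt_tsum_pow (fun n => 1/((n:ℝ)+1)^2) (fun n => by
      rw [abs_of_nonneg (by positivity), div_le_one (by positivity)]
      nlinarith [Nat.cast_nonneg (α := ℝ) n]) ha hau hu).1)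
  · apply (MeasureTheory.ae_restrict_iff' measurableSet_Ioc).2
    filter_upwards [ae_ne_zero] with t ht hmem
    exact (Li2_div_rep (abs_lt.2 ⟨by linarith [hmem.1], by linarith [hmem.2]⟩) ht).symm

lemma openNbhd {y : ℝ} (h0 : -1 < y) (h1 : y < 1) : Ioo (-1:ℝ) 1 ∈ nhds y :=
  Ioo_mem_nhds h0 h1

lemma hasDerivAt_Li2 {y : ℝ} (h0 : -1 < y) (h1 : y < 1) (hy : y ≠ 0) :
    HasDerivAt Li2 (-Real.log (1 - y) / y) y := by
  set a : ℝ := (-1 + y)/2 with hadef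
  have ha : -1 < a := by rw [hadef]; linarith
  have hay : a < y := by rw [hadef]; linarith
  set g : ℝ → ℝ := fun t => -Real.log (1-t)/t with hg
  have hsop : IsOpen (Ioo (-1:ℝ) 1 \ {0}) := isOpen_Ioo.sdiff isClosed_singleton
  have hmem : y ∈ Ioo (-1:ℝ) 1 \ {0} := ⟨⟨h0, h1⟩, hy⟩
  have hco : ContinuousOn g (Ioo (-1:ℝ) 1 \ {0}) := by
    intro t ht
    exact (continuousAt_logint ht.1.2 ht.2).continuousWithinAt
  have hF : HasDerivAt (fun u => Li2 a + ∫ t in a..u, g t) (g y) y := by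
    apply HasDerivAt.const_add
    apply intervalIntegral.integral_hasDerivAt_right
      (intInt_logint ha (le_of_lt hay) h1)
      (hco.stronglyMeasurableAtFilter hsop y hmem)
      (continuousAt_logint h1 hy)
  apply hF.congr_of_eventuallyEq
  filter_upwards [Ioo_mem_nhds hay h1] with u hu
  rw [Li2_sub ha (le_of_lt hu.1) hu.2]
  ring

lemma hasDerivAt_Li3 {y : ℝ} (h0 : -1 < y) (h1 : y < 1) (hy : y ≠ 0) :
    HasDerivAt Li3 (Li2 y / y) y := by
  set a : ℝ := (-1 + y)/2 with hadef
  have ha : -1 < a := by rw [hadef]; linarith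
  have hay : a < y := by rw [hadef]; linarith
  set g : ℝ → ℝ := fun t => Li2 t / t with hg
  have hsop : IsOpen (Ioo (-1:ℝ) 1 \ {0}) := isOpen_Ioo.sdiff isClosed_singleton
  have hmem : y ∈ Ioo (-1:ℝ) 1 \ {0} := ⟨⟨h0, h1⟩, hy⟩
  have hco : ContinuousOn g (Ioo (-1:ℝ) 1 \ {0}) := by
    intro t ht
    exact (continuousAt_Li2div ht.1.1 ht.1.2 ht.2).continuousWithinAt
  have hF : HasDerivAt (fun u => Li3 a + ∫ t in a..u, g t) (g y) y := by
    apply HasDerivAt.const_add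
    apply intervalIntegral.integral_hasDerivAt_right
      (intInt_Li2div ha (le_of_lt hay) h1)
      (hco.stronglyMeasurableAtFilter hsop y hmem)
      (continuousAt_Li2div h0 h1 hy)
  apply hF.congr_of_eventuallyEq
  filter_upwards [Ioo_mem_nhds hay h1] with u hu
  rw [Li3_sub ha (le_of_lt hu.1) hu.2]
  ring

lemma zero_of_deriv {f : ℝ → ℝ} (hcont : ContinuousOn f (Icc 0 1))
    (hderiv : ∀ x ∈ Ioo (0:ℝ) 1, HasDerivAt f 0 x) (h0 : f 0 = 0) :
    ∀ x ∈ Icc (0:ℝ) 1, f x = 0 := by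
  intro x hx
  rcases eq_or_lt_of_le hx.1 with h | h
  · rw [← h, h0]
  · have := intervalIntegral.integral_eq_sub_of_hasDeriv_right_of_le (f := f)
      (f' := fun _ => (0:ℝ)) (le_of_lt h)
      (hcont.mono (Icc_subset_Icc le_rfl hx.2))
      (fun y hy => (hderiv y ⟨hy.1, lt_of_lt_of_le hy.2 hx.2⟩).hasDerivWithinAt)
      (intervalIntegrable_const)
    simp only [intervalIntegral.integral_zero] at this
    rw [h0] at this
    linarith

lemma contOn_sdiv : ContinuousOn (fun x : ℝ => x/(1+x)) (Icc 0 1) := by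
  apply ContinuousOn.div continuousOn_id (by fun_prop)
  intro x hx
  have := hx.1
  intro hc; linarith

lemma maps_sdiv : ∀ x ∈ Icc (0:ℝ) 1, x/(1+x) ∈ Icc (-1:ℝ) 1 := by
  intro x hx
  have h1 : (0:ℝ) < 1 + x := by linarith [hx.1]
  have h2 : 0 ≤ x/(1+x) := div_nonneg hx.1 h1.le
  constructor
  · linarith
  · rw [div_le_one h1]; linarith [hx.1]

lemma contOn_Li2s : ContinuousOn (fun x : ℝ => Li2 (x/(1+x))) (Icc 0 1) :=
  continuousOn_Li2.comp contOn_sdiv maps_sdiv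

lemma contOn_Li2neg : ContinuousOn (fun x : ℝ => Li2 (-x)) (Icc 0 1) := by
  apply continuousOn_Li2.comp continuous_neg.continuousOn
  intro x hx
  simp only [mem_Icc]
  constructor <;> [linarith [hx.2]; linarith [hx.1]]

lemma contOn_L : ContinuousOn (fun x : ℝ => Real.log (1+x)) (Icc 0 1) := by
  apply ContinuousOn.log (by fun_prop)
  intro x hx; intro hc; linarith [hx.1]

lemma hasDerivAt_s {x : ℝ} (hx0 : 0 < x) (hx1 : x < 1) :
    HasDerivAt (fun x : ℝ => x/(1+x)) (1/(1+x)^2) x := by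
  have h := (hasDerivAt_id x).div ((hasDerivAt_id x).const_add 1)
    (by simp only [id]; intro hc; linarith)
  refine h.congr_deriv ?_; symm
  field_simp
  simp only [id, add_sub_cancel_right, mul_one]
  exact (div_self (pow_pos (by linarith) 2).ne').symm

lemma hasDerivAt_L {x : ℝ} (hx0 : 0 < x) :
    HasDerivAt (fun x : ℝ => Real.log (1+x)) (1/(1+x)) x := by
  have h := (Real.hasDerivAt_log (by linarith : (1:ℝ)+x ≠ 0)).comp x ((hasDerivAt_id x).const_add 1)
  refine h.congr_deriv ?_; symm
  simp [one_div]

lemma hasDerivAt_Li2neg {x : ℝ} (hx0 : 0 < x) (hx1 : x < 1) :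
    HasDerivAt (fun x : ℝ => Li2 (-x)) (-Real.log (1+x)/x) x := by
  have h := (hasDerivAt_Li2 (y := -x) (by linarith) (by linarith) (by intro hc; linarith)).comp x
    ((hasDerivAt_id x).neg)
  refine h.congr_deriv ?_; symm
  rw [sub_neg_eq_add]
  field_simp

lemma hasDerivAt_Li3neg {x : ℝ} (hx0 : 0 < x) (hx1 : x < 1) :
    HasDerivAt (fun x : ℝ => Li3 (-x)) (Li2 (-x)/x) x := by
  have h := (hasDerivAt_Li3 (y := -x) (by linarith) (by linarith) (by intro hc; linarith)).comp x
    ((hasDerivAt_id x).neg)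
  refine h.congr_deriv ?_; symm
  field_simp

lemma s_pos {x : ℝ} (hx0 : 0 < x) (hx1 : x < 1) : 0 < x/(1+x) := by positivity

lemma s_lt_one {x : ℝ} (hx0 : 0 < x) (hx1 : x < 1) : x/(1+x) < 1 := by
  rw [div_lt_one (by linarith)]; linarith

lemma one_sub_s {x : ℝ} (hx0 : 0 < x) : (1:ℝ) - x/(1+x) = (1+x)⁻¹ := by
  field_simp
  ring

lemma hasDerivAt_Li2s {x : ℝ} (hx0 : 0 < x) (hx1 : x < 1) :
    HasDerivAt (fun x : ℝ => Li2 (x/(1+x))) (Real.log (1+x)/(x*(1+x))) x := by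
  have hs0 := s_pos hx0 hx1
  have hs1 := s_lt_one hx0 hx1
  have h := (hasDerivAt_Li2 (y := x/(1+x)) (by linarith) hs1 (ne_of_gt hs0)).comp x
    (hasDerivAt_s hx0 hx1)
  refine h.congr_deriv ?_; symm
  rw [one_sub_s hx0, Real.log_inv]
  have h1 : (1:ℝ) + x ≠ 0 := by linarith
  field_simp

lemma hasDerivAt_Li3s {x : ℝ} (hx0 : 0 < x) (hx1 : x < 1) :
    HasDerivAt (fun x : ℝ => Li3 (x/(1+x))) (Li2 (x/(1+x))/(x*(1+x))) x := by
  have hs0 := s_pos hx0 hx1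
  have hs1 := s_lt_one hx0 hx1
  have h := (hasDerivAt_Li3 (y := x/(1+x)) (by linarith) hs1 (ne_of_gt hs0)).comp x
    (hasDerivAt_s hx0 hx1)
  refine h.congr_deriv ?_; symm
  have h1 : (1:ℝ) + x ≠ 0 := by linarith
  field_simp

lemma landen : ∀ x ∈ Icc (0:ℝ) 1,
    Li2 (x/(1+x)) + Li2 (-x) + (Real.log (1+x))^2/2 = 0 := by
  apply zero_of_deriv
  · apply ContinuousOn.add (ContinuousOn.add contOn_Li2s contOn_Li2neg)
    exact (contOn_L.pow 2).div_const 2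
  · intro x hx
    obtain ⟨hx0, hx1⟩ := hx
    have h1 : (0:ℝ) < 1 + x := by linarith
    have hD := ((hasDerivAt_Li2s hx0 hx1).add (hasDerivAt_Li2neg hx0 hx1)).add
      (((hasDerivAt_L hx0).pow 2).div_const 2)
    refine hD.congr_deriv ?_; symm
    field_simp
    ring
  · simp [Li2_zero]

lemma contOn_Ll : ContinuousOn (fun x : ℝ => Real.log (1+x) * Real.log x) (Icc 0 1) := by
  intro x hx
  rcases eq_or_lt_of_le hx.1 with h | h
  · -- x = 0
    subst h
    have hb : Tendsto (fun x : ℝ => |Real.log x * x|) (nhdsWithin 0 (Icc (0:ℝ) 1)) (nhds 0) := by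
      have hsub : Icc (0:ℝ) 1 ⊆ {0} ∪ Ioi 0 := by
        intro y hy
        rcases eq_or_lt_of_le hy.1 with h' | h'
        · exact Or.inl (by simp [← h'])
        · exact Or.inr h'
      apply Tendsto.mono_left _ (nhdsWithin_mono 0 hsub)
      rw [nhdsWithin_union]
      rw [Filter.tendsto_sup]
      constructor
      · rw [nhdsWithin_singleton]
        have := tendsto_pure_nhds (fun x : ℝ => |Real.log x * x|) 0
        simpa using this
      · have h1 := tendsto_log_mul_rpow_nhdsGT_zero one_pos
        simp only [Real.rpow_one] at h1
        simpa using h1.abs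
    rw [ContinuousWithinAt]
    have hval : Real.log (1+(0:ℝ)) * Real.log 0 = 0 := by simp
    rw [hval]
    apply squeeze_zero_norm' _ hb
    filter_upwards [eventually_mem_nhdsWithin] with y hy
    rcases eq_or_lt_of_le hy.1 with h' | h'
    · simp [← h']
    · have hL0 : 0 ≤ Real.log (1+y) := Real.log_nonneg (by linarith)
      have hLy : Real.log (1+y) ≤ y := by
        have := Real.log_le_sub_one_of_pos (x := 1+y) (by linarith)
        linarith
      rw [Real.norm_eq_abs, abs_mul, abs_mul]
      rw [abs_of_nonneg hL0, abs_of_nonneg h'.le, mul_comm |Real.log y| y]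
      exact mul_le_mul_of_nonneg_right hLy (abs_nonneg _)
  · -- 0 < x
    apply ContinuousAt.continuousWithinAt
    have c1 : ContinuousAt (fun x : ℝ => Real.log (1+x)) x := by
      apply (Real.continuousAt_log (by simp; intro hc; linarith)).comp
      exact (continuous_const.add continuous_id).continuousAt
    exact c1.mul (Real.continuousAt_log (ne_of_gt h))

lemma contOn_t : ContinuousOn (fun x : ℝ => (1+x)⁻¹) (Icc 0 1) := by
  apply ContinuousOn.inv₀ (by fun_prop)
  intro x hx; intro hc; linarith [hx.1]

lemma maps_t : ∀ x ∈ Icc (0:ℝ) 1, (1+x)⁻¹ ∈ Icc (-1:ℝ) 1 := by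
  intro x hx
  have h1 : (0:ℝ) < 1 + x := by linarith [hx.1]
  constructor
  · have : (0:ℝ) < (1+x)⁻¹ := by positivity
    linarith
  · rw [inv_le_one_iff₀]; right; linarith [hx.1]

lemma contOn_Li2t : ContinuousOn (fun x : ℝ => Li2 ((1+x)⁻¹)) (Icc 0 1) :=
  continuousOn_Li2.comp contOn_t maps_t

lemma contOn_Li3t : ContinuousOn (fun x : ℝ => Li3 ((1+x)⁻¹)) (Icc 0 1) :=
  continuousOn_Li3.comp contOn_t maps_t

lemma contOn_Li3s : ContinuousOn (fun x : ℝ => Li3 (x/(1+x))) (Icc 0 1) :=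
  continuousOn_Li3.comp contOn_sdiv maps_sdiv

lemma contOn_Li3neg : ContinuousOn (fun x : ℝ => Li3 (-x)) (Icc 0 1) := by
  apply continuousOn_Li3.comp continuous_neg.continuousOn
  intro x hx
  simp only [mem_Icc]
  constructor <;> [linarith [hx.2]; linarith [hx.1]]

lemma hasDerivAt_t {x : ℝ} (hx0 : 0 < x) :
    HasDerivAt (fun x : ℝ => (1+x)⁻¹) (-(1/(1+x)^2)) x := by
  have h := ((hasDerivAt_id x).const_add 1).inv (by simp only [id]; intro hc; linarith)
  refine h.congr_deriv ?_; symm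
  simp only [id]
  ring

lemma t_mem {x : ℝ} (hx0 : 0 < x) (hx1 : x < 1) :
    0 < (1+x)⁻¹ ∧ (1+x)⁻¹ < 1 := by
  constructor
  · positivity
  · rw [inv_lt_one_iff₀]; right; linarith

lemma one_sub_t {x : ℝ} (hx0 : 0 < x) : (1:ℝ) - (1+x)⁻¹ = x/(1+x) := by
  field_simp
  ring

lemma hasDerivAt_Li2t {x : ℝ} (hx0 : 0 < x) (hx1 : x < 1) :
    HasDerivAt (fun x : ℝ => Li2 ((1+x)⁻¹))
      ((Real.log x - Real.log (1+x))/(1+x)) x := by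
  obtain ⟨ht0, ht1⟩ := t_mem hx0 hx1
  have h := (hasDerivAt_Li2 (y := (1+x)⁻¹) (by linarith) ht1 (ne_of_gt ht0)).comp x
    (hasDerivAt_t hx0)
  refine h.congr_deriv ?_; symm
  rw [one_sub_t hx0, Real.log_div (ne_of_gt hx0) (by linarith)]
  have h1 : (1:ℝ) + x ≠ 0 := by linarith
  field_simp

lemma hasDerivAt_Li3t {x : ℝ} (hx0 : 0 < x) (hx1 : x < 1) :
    HasDerivAt (fun x : ℝ => Li3 ((1+x)⁻¹))
      (-(Li2 ((1+x)⁻¹)/(1+x))) x := by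
  obtain ⟨ht0, ht1⟩ := t_mem hx0 hx1
  have h := (hasDerivAt_Li3 (y := (1+x)⁻¹) (by linarith) ht1 (ne_of_gt ht0)).comp x
    (hasDerivAt_t hx0)
  refine h.congr_deriv ?_; symm
  have h1 : (1:ℝ) + x ≠ 0 := by linarith
  field_simp

lemma li2_reflection : ∀ x ∈ Icc (0:ℝ) 1,
    Li2 ((1+x)⁻¹) + Li2 (x/(1+x)) - Real.log (1+x) * Real.log x
      + (Real.log (1+x))^2 - Real.pi^2/6 = 0 := by
  apply zero_of_deriv
  · apply ContinuousOn.sub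
    apply ContinuousOn.add
    apply ContinuousOn.sub (ContinuousOn.add contOn_Li2t contOn_Li2s) contOn_Ll
    exact contOn_L.pow 2
    exact continuousOn_const
  · intro x hx
    obtain ⟨hx0, hx1⟩ := hx
    have h1 : (0:ℝ) < 1 + x := by linarith
    have hl : HasDerivAt (fun x : ℝ => Real.log (1+x) * Real.log x)
        ((1/(1+x)) * Real.log x + Real.log (1+x) * x⁻¹) x :=
      (hasDerivAt_L hx0).mul (Real.hasDerivAt_log (ne_of_gt hx0))
    have hD := ((((hasDerivAt_Li2t hx0 hx1).add (hasDerivAt_Li2s hx0 hx1)).sub hl).add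
      ((hasDerivAt_L hx0).pow 2)).sub (hasDerivAt_const x (Real.pi^2/6))
    refine hD.congr_deriv ?_; symm
    field_simp
    ring
  · norm_num [Li2_zero, Li2_one]

lemma contOn_LLl : ContinuousOn (fun x : ℝ => (Real.log (1+x))^2 * Real.log x) (Icc 0 1) := by
  apply ContinuousOn.congr (contOn_L.mul contOn_Ll)
  intro x hx
  simp only [Pi.mul_apply]
  ring

lemma trilog_identity : ∀ x ∈ Icc (0:ℝ) 1,
    Li3 ((1+x)⁻¹) + Li3 (x/(1+x)) + Li3 (-x) - (Real.log (1+x))^3/3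
      + Real.pi^2 * Real.log (1+x)/6 + (Real.log (1+x))^2 * Real.log x/2
      - (∑' n : ℕ, 1 / ((n : ℝ) + 1) ^ 3) = 0 := by
  apply zero_of_deriv
  · apply ContinuousOn.sub _ continuousOn_const
    apply ContinuousOn.add
    apply ContinuousOn.add
    apply ContinuousOn.sub (ContinuousOn.add (ContinuousOn.add contOn_Li3t contOn_Li3s) contOn_Li3neg)
    · exact (contOn_L.pow 3).div_const 3
    · exact (contOn_L.const_smul (Real.pi^2) |>.div_const 6).congr (by intro x hx; simp [smul_eq_mul])
    · exact contOn_LLl.div_const 2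
  · intro x hx
    obtain ⟨hx0, hx1⟩ := hx
    have h1 : (0:ℝ) < 1 + x := by linarith
    have hrefl := li2_reflection x ⟨hx0.le, hx1.le⟩
    have hland := landen x ⟨hx0.le, hx1.le⟩
    have hLi2t : Li2 ((1+x)⁻¹) = Real.pi^2/6 + Real.log (1+x) * Real.log x
        - (Real.log (1+x))^2 - Li2 (x/(1+x)) := by linarith
    have hLi2s : Li2 (x/(1+x)) = -Li2 (-x) - (Real.log (1+x))^2/2 := by linarith
    have hD := ((((((hasDerivAt_Li3t hx0 hx1).add (hasDerivAt_Li3s hx0 hx1)).add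
      (hasDerivAt_Li3neg hx0 hx1)).sub
      (((hasDerivAt_L hx0).pow 3).div_const 3)).add
      (((hasDerivAt_L hx0).const_mul (Real.pi^2)).div_const 6)).add
      ((((hasDerivAt_L hx0).pow 2).mul (Real.hasDerivAt_log (ne_of_gt hx0))).div_const 2)).sub
      (hasDerivAt_const x (∑' n : ℕ, 1 / ((n : ℝ) + 1) ^ 3))
    refine hD.congr_deriv ?_; symm
    rw [hLi2t, hLi2s]
    simp only [Pi.pow_apply]
    field_simp
    ring
  · norm_num [Li3_zero, Li3_one]

noncomputable def Gfun (x : ℝ) : ℝ :=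
  2 * Li3 (-x) + 2 * Li3 (x/(1+x)) - (Real.log (1+x))^3/3 - Real.log (1+x) * Li2 (-x)

lemma main_ftc : ∫ x in (0:ℝ)..1, Li2 (-x) / (1+x) = Gfun 1 - Gfun 0 := by
  apply intervalIntegral.integral_eq_sub_of_hasDeriv_right_of_le zero_le_one
  · apply ContinuousOn.sub
    apply ContinuousOn.sub
    apply ContinuousOn.add (contOn_Li3neg.const_smul 2 |>.congr (by intro x hx; simp [smul_eq_mul]))
      (contOn_Li3s.const_smul 2 |>.congr (by intro x hx; simp [smul_eq_mul]))
    · exact (contOn_L.pow 3).div_const 3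
    · exact contOn_L.mul contOn_Li2neg
  · intro x hx
    obtain ⟨hx0, hx1⟩ := hx
    have h1 : (0:ℝ) < 1 + x := by linarith
    have hland := landen x ⟨hx0.le, hx1.le⟩
    have hLi2s : Li2 (x/(1+x)) = -Li2 (-x) - (Real.log (1+x))^2/2 := by linarith
    have hD := ((((hasDerivAt_Li3neg hx0 hx1).const_mul 2).add
      ((hasDerivAt_Li3s hx0 hx1).const_mul 2)).sub
      (((hasDerivAt_L hx0).pow 3).div_const 3)).sub
      ((hasDerivAt_L hx0).mul (hasDerivAt_Li2neg hx0 hx1))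
    apply HasDerivAt.hasDerivWithinAt
    refine hD.congr_deriv ?_; symm
    rw [hLi2s]
    field_simp
    ring
  · apply ContinuousOn.intervalIntegrable
    rw [Set.uIcc_of_le zero_le_one]
    apply ContinuousOn.div contOn_Li2neg (by fun_prop)
    intro x hx; intro hc; linarith [hx.1]

theorem stmt_11 :
    -(∫ x in (0:ℝ)..1, Li2 (-x) / (1 + x))
      = Real.pi ^ 2 / 12 * Real.log 2 - (∑' n : ℕ, 1 / ((n : ℝ) + 1) ^ 3) / 4 := by
  have hG0 : Gfun 0 = 0 := by
    simp [Gfun, Li3_zero, Li2_zero]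
  have htri := trilog_identity 1 (by norm_num)
  have h12 : ((1:ℝ)+1)⁻¹ = 1/2 := by norm_num
  have h12' : (1:ℝ)/(1+1) = 1/2 := by norm_num
  rw [h12, h12'] at htri
  simp only [Real.log_one, mul_zero, zero_div, add_zero] at htri
  have hlog2 : Real.log (1+(1:ℝ)) = Real.log 2 := by norm_num
  rw [hlog2] at htri
  have hmain := main_ftc
  rw [hG0, sub_zero] at hmain
  have hG1 : Gfun 1 = 2 * Li3 (-1) + 2 * Li3 (1/2) - (Real.log 2)^3/3
      - Real.log 2 * Li2 (-1) := by
    simp only [Gfun]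
    norm_num
  have hL3 := Li3_neg_one
  have hL2 := Li2_neg_one
  rw [hmain, hG1, hL3, hL2]
  rw [hL3] at htri
  linear_combination -htri
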